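/- arXiv:1808.04915 — 2 statements merged into one kernel-verified Lean document; each statement's English description precedes it below -/
import Mathlib

section
/- Let C and D be categories with functors F : C → D and U : D → C, and suppose there exist natural transformations η : id_C ⇒ U F and ε : id_D ⇒ F U (directions as stated). Then F induces an equivalence of fundamental groupoids Π₁(C) ≃ Π₁(D). In particular, for every object X of C, π₁(C, X) ≅ π₁(D, F X). -/
open CategoryTheory

universe v v' u u'

/-- The fundamental groupoid of a category: its localization at all morphisms. -/
abbrev Pi1 (C : Type u) [Category.{v} C] := (⊤ : MorphismProperty C).Localization

/-- The canonical functor to the fundamental groupoid. -/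
abbrev pi1Q (C : Type u) [Category.{v} C] : C ⥤ Pi1 C := (⊤ : MorphismProperty C).Q

instance pi1QMapIsIso {C : Type u} [Category.{v} C] {X Y : C} (f : X ⟶ Y) :
    IsIso ((pi1Q C).map f) :=
  (⊤ : MorphismProperty C).Q_inverts f (MorphismProperty.top_apply f)

/-- Functoriality of the fundamental groupoid. -/
noncomputable def Pi1Map {C : Type u} [Category.{v} C] {D : Type u'} [Category.{v'} D] (F : C ⥤ D) :
    Pi1 C ⥤ Pi1 D :=
  Localization.Construction.lift (F ⋙ pi1Q D)
    (fun _ _ f _ => by dsimp; infer_instance)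

/-- Every morphism in `Pi1 C` is an isomorphism. -/
theorem pi1_all_isIso {C : Type u} [Category.{v} C] {X Y : Pi1 C} (f : X ⟶ Y) : IsIso f := by
  have h : (MorphismProperty.isomorphisms (Pi1 C)) = ⊤ := by
    apply Localization.Construction.morphismProperty_eq_top'
    · intro X Y f
      exact pi1QMapIsIso f
    · intro X Y e he
      have : IsIso e.hom := he
      exact (inferInstance : IsIso e.inv)
  have : (MorphismProperty.isomorphisms (Pi1 C)) f := by rw [h]; trivial
  exact this

theorem pi1Map_fac {C : Type u} [Category.{v} C] {D : Type u'} [Category.{v'} D] (F : C ⥤ D) :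
    pi1Q C ⋙ Pi1Map F = F ⋙ pi1Q D :=
  Localization.Construction.fac _ _

/-- Lift a natural transformation `𝟭 ⟶ G ⋙ H` to the localizations. -/
noncomputable def pi1UnitIso {C : Type u} [Category.{v} C] {D : Type u'} [Category.{v'} D]
    (G : C ⥤ D) (H : D ⥤ C) (η : 𝟭 C ⟶ G ⋙ H) :
    𝟭 (Pi1 C) ≅ Pi1Map G ⋙ Pi1Map H := by
  have e : pi1Q C ⋙ (Pi1Map G ⋙ Pi1Map H) = (G ⋙ H) ⋙ pi1Q C := by
    rw [← Functor.assoc, pi1Map_fac, Functor.assoc, pi1Map_fac, Functor.assoc]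
  have τ : pi1Q C ⋙ 𝟭 (Pi1 C) ⟶ pi1Q C ⋙ (Pi1Map G ⋙ Pi1Map H) :=
    eqToHom (Functor.comp_id _) ≫ Functor.whiskerRight η (pi1Q C) ≫ eqToHom e.symm
  have t := Localization.Construction.natTransExtension τ
  have : ∀ Z, IsIso (t.app Z) := fun Z => pi1_all_isIso _
  have : IsIso t := NatIso.isIso_of_isIso_app t
  exact asIso t

/-- If `F : C ⥤ D` and `U : D ⥤ C` admit natural transformations `𝟭 C ⟶ F ⋙ U` and
`𝟭 D ⟶ U ⋙ F`, then `F` induces an equivalence of fundamental groupoids; in particular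
`π₁(C, X) ≅ π₁(D, F X)` for every object `X`. -/
theorem stmt_18 {C : Type u} [Category.{v} C] {D : Type u'} [Category.{v'} D]
    (F : C ⥤ D) (U : D ⥤ C) (η : 𝟭 C ⟶ F ⋙ U) (ε : 𝟭 D ⟶ U ⋙ F) :
    (Pi1Map F).IsEquivalence ∧
      ∀ X : C, Nonempty (Aut ((pi1Q C).obj X) ≃* Aut ((pi1Q D).obj (F.obj X))) := by
  have unit : 𝟭 (Pi1 C) ≅ Pi1Map F ⋙ Pi1Map U := pi1UnitIso F U η
  have counit : Pi1Map U ⋙ Pi1Map F ≅ 𝟭 (Pi1 D) := (pi1UnitIso U F ε).symm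
  have hE : (Pi1Map F).IsEquivalence :=
    (CategoryTheory.Equivalence.mk (Pi1Map F) (Pi1Map U) unit counit).isEquivalence_functor
  refine ⟨hE, fun X => ?_⟩
  have ff : (Pi1Map F).FullyFaithful := Functor.FullyFaithful.ofFullyFaithful _
  have hobj : (Pi1Map F).obj ((pi1Q C).obj X) = (pi1Q D).obj (F.obj X) :=
    Functor.congr_obj (pi1Map_fac F) X
  exact ⟨(ff.autMulEquivOfFullyFaithful _).trans (Aut.autMulEquivOfIso (eqToIso hobj))⟩
end

section
/- Let C be a category in which every morphism is a monomorphism, let B ← A → C be a span in C, and form the pushout of hom-functors: define a new category C' obtained from C by adjoining one object P with Hom(X, P) = Hom(X, B) ⊔_{Hom(X, A)} Hom(X, C) for X in C, identity on P, and no morphisms out of P except the identity. Then C' is a category (composition is well defined and associative), every morphism of C' is a monomorphism, and the given span admits an amalgam in C': there are morphisms B → P and C → P making the square with the span commute. -/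
open CategoryTheory

universe v u

variable {C : Type u} [Category.{v} C]

/-- Objects of the category obtained from `C` by adjoining a single amalgamation vertex. -/
inductive AmalgObjRaw (C : Type u) : Type u
  | of (X : C)
  | pt

section

variable {A B B' : C} (f : A ⟶ B) (g : A ⟶ B')

/-- The relation identifying `h ≫ f` and `h ≫ g` inside `Hom(X,B) ⊔ Hom(X,B')`;
its quotient is the pushout of sets `Hom(X,B) ⊔_{Hom(X,A)} Hom(X,B')`. -/
def witnessRel (X : C) : ((X ⟶ B) ⊕ (X ⟶ B')) → ((X ⟶ B) ⊕ (X ⟶ B')) → Prop :=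
  fun p q => ∃ h : X ⟶ A, p = Sum.inl (h ≫ f) ∧ q = Sum.inr (h ≫ g)

/-- Precomposition on the disjoint union of hom-sets. -/
def sumPre {X Y : C} (e : X ⟶ Y) : ((Y ⟶ B) ⊕ (Y ⟶ B')) → ((X ⟶ B) ⊕ (X ⟶ B'))
  | .inl p => .inl (e ≫ p)
  | .inr p => .inr (e ≫ p)

/-- Morphisms of the amalgamation category. -/
def AmalgHom : AmalgObjRaw C → AmalgObjRaw C → Type v
  | .of X, .of Y => X ⟶ Y
  | .of X, .pt => Quot (witnessRel f g X)
  | .pt, .of _ => PEmpty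
  | .pt, .pt => PUnit

/-- The category `C'` obtained from `C` by adjoining one object `P` with
`Hom(X, P) = Hom(X, B) ⊔_{Hom(X, A)} Hom(X, B')` and no nonidentity morphisms out
of `P`. -/
def AmalgObj (_f : A ⟶ B) (_g : A ⟶ B') : Type u := AmalgObjRaw C

/-- The elimination of an impossible morphism out of the adjoined point. -/
def AmalgHom.elimPt {X : AmalgObjRaw C} {Y : C}
    (u : AmalgHom f g X (.of Y)) (hX : X = .pt) : ∀ {motive : Sort*}, motive := by
  subst hX; exact fun {motive} => PEmpty.elim u

instance amalgCategory : Category.{v} (AmalgObj f g) where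
  Hom X Y := AmalgHom f g X Y
  id X := match X with
    | .of X => 𝟙 X
    | .pt => PUnit.unit
  comp {X Y Z} u v := match X, Y, Z, u, v with
    | .of _, .of _, .of _, u, v => u ≫ v
    | .of X, .of _, .pt, u, v =>
        Quot.lift (fun p => Quot.mk (witnessRel f g X) (sumPre u p))
          (by
            rintro p q ⟨h, rfl, rfl⟩
            exact Quot.sound ⟨u ≫ h, congrArg Sum.inl (Category.assoc u h f).symm,
              congrArg Sum.inr (Category.assoc u h g).symm⟩) v
    | .of _, .pt, .pt, u, _ => u
    | .pt, .pt, .pt, _, _ => PUnit.unit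
    | .pt, .of _, _, u, _ => PEmpty.elim u
    | .of _, .pt, .of _, _, v => PEmpty.elim v
  id_comp := by
    intro X Y u
    match X, Y, u with
    | .of _, .of _, u => exact Category.id_comp u
    | .of X, .pt, u =>
      refine Quot.inductionOn u fun p => ?_
      cases p with
      | inl p => exact congrArg (Quot.mk _) (congrArg Sum.inl (Category.id_comp p))
      | inr p => exact congrArg (Quot.mk _) (congrArg Sum.inr (Category.id_comp p))
    | .pt, .of _, u => exact PEmpty.elim u
    | .pt, .pt, u => rfl
  comp_id := by
    intro X Y u
    match X, Y, u with
    | .of _, .of _, u => exact Category.comp_id u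
    | .of X, .pt, u => rfl
    | .pt, .of _, u => exact PEmpty.elim u
    | .pt, .pt, u => rfl
  assoc := by
    intro W X Y Z u v w
    match W, X, Y, Z, u, v, w with
    | .of _, .of _, .of _, .of _, u, v, w => exact Category.assoc u v w
    | .of _, .of _, .of _, .pt, u, v, w =>
      refine Quot.inductionOn w fun p => ?_
      cases p with
      | inl p => exact congrArg (Quot.mk _) (congrArg Sum.inl (Category.assoc u v p))
      | inr p => exact congrArg (Quot.mk _) (congrArg Sum.inr (Category.assoc u v p))
    | .of _, .of _, .pt, .pt, u, v, w => rfl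
    | .of _, .pt, .pt, .pt, u, v, w => rfl
    | .pt, .pt, .pt, .pt, u, v, w => rfl
    | .pt, .of _, _, _, u, v, w => exact PEmpty.elim u
    | .of _, .pt, .of _, _, u, v, w => exact PEmpty.elim v
    | .pt, .pt, .of _, _, u, v, w => exact PEmpty.elim v
    | .of _, .of _, .pt, .of _, u, v, w => exact PEmpty.elim w
    | .of _, .pt, .pt, .of _, u, v, w => exact PEmpty.elim w
    | .pt, .pt, .pt, .of _, u, v, w => exact PEmpty.elim w

/-- The adjoined amalgamation vertex. -/
def amalgPt : AmalgObj f g := AmalgObjRaw.pt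

/-- The inclusion of `C` into the amalgamation category. -/
def amalgIncl : C ⥤ AmalgObj f g where
  obj X := AmalgObjRaw.of X
  map {X Y} u := (u : AmalgHom f g (.of X) (.of Y))
  map_id _ := rfl
  map_comp _ _ := rfl

/-- An explicit description of the equivalence relation generated by `witnessRel`. -/
def gRel (X : C) : ((X ⟶ B) ⊕ (X ⟶ B')) → ((X ⟶ B) ⊕ (X ⟶ B')) → Prop
  | .inl p, .inl q => p = q
  | .inl p, .inr q => ∃ h : X ⟶ A, p = h ≫ f ∧ q = h ≫ g
  | .inr p, .inl q => ∃ h : X ⟶ A, q = h ≫ f ∧ p = h ≫ g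
  | .inr p, .inr q => p = q

lemma gRel_of_eqvGen (hmono : ∀ {X Y : C} (u : X ⟶ Y), Mono u) {X : C}
    {x y : (X ⟶ B) ⊕ (X ⟶ B')} (h : Relation.EqvGen (witnessRel f g X) x y) :
    gRel f g X x y := by
  haveI : Mono f := hmono f
  haveI : Mono g := hmono g
  induction h with
  | rel x y hxy =>
      obtain ⟨h, rfl, rfl⟩ := hxy
      exact ⟨h, rfl, rfl⟩
  | refl x => cases x <;> exact rfl
  | symm x y _ ih =>
      cases x <;> cases y <;> simp only [gRel] at ih ⊢
      · exact ih.symm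
      · exact ih
      · exact ih
      · exact ih.symm
  | trans x y z _ _ ih1 ih2 =>
      cases x <;> cases y <;> cases z <;> simp only [gRel] at ih1 ih2 ⊢
      · exact ih1.trans ih2
      · exact ih1 ▸ ih2
      · obtain ⟨h, rfl, rfl⟩ := ih1
        obtain ⟨h', h'1, h'2⟩ := ih2
        obtain rfl : h = h' := (cancel_mono g).mp h'2
        exact h'1.symm
      · obtain ⟨h, rfl, rfl⟩ := ih1
        exact ⟨h, rfl, ih2 ▸ rfl⟩
      · obtain ⟨h, rfl, rfl⟩ := ih1
        exact ⟨h, ih2 ▸ rfl, rfl⟩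
      · obtain ⟨h, rfl, rfl⟩ := ih1
        obtain ⟨h', h'1, h'2⟩ := ih2
        obtain rfl : h = h' := (cancel_mono f).mp h'1
        exact h'2.symm
      · exact ih1 ▸ ih2
      · exact ih1.trans ih2

lemma quot_inl_inj (hmono : ∀ {X Y : C} (u : X ⟶ Y), Mono u) {X : C} {p q : X ⟶ B}
    (h : Quot.mk (witnessRel f g X) (Sum.inl p) = Quot.mk (witnessRel f g X) (Sum.inl q)) :
    p = q :=
  gRel_of_eqvGen f g hmono (Quot.eqvGen_exact h)

lemma quot_inr_inj (hmono : ∀ {X Y : C} (u : X ⟶ Y), Mono u) {X : C} {p q : X ⟶ B'}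
    (h : Quot.mk (witnessRel f g X) (Sum.inr p) = Quot.mk (witnessRel f g X) (Sum.inr q)) :
    p = q :=
  gRel_of_eqvGen f g hmono (Quot.eqvGen_exact h)

/-- Single-step amalgamation: if every morphism of `C` is a monomorphism, then in the
category `C'` obtained by adjoining the pushout-of-homs object `P` to the span
`B ← A → B'`, every morphism is again a monomorphism, and the span admits an amalgam:
morphisms `B → P` and `B' → P` making the square with the span commute. -/
theorem stmt_19 (hmono : ∀ {X Y : C} (u : X ⟶ Y), Mono u) :
    (∀ {X Y : AmalgObj f g} (u : X ⟶ Y), Mono u) ∧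
      ∃ (β : (amalgIncl f g).obj B ⟶ amalgPt f g)
        (γ : (amalgIncl f g).obj B' ⟶ amalgPt f g),
        (amalgIncl f g).map f ≫ β = (amalgIncl f g).map g ≫ γ := by
  constructor
  · intro X Y u
    constructor
    intro Z a b hab
    cases X with
    | pt =>
      cases Y with
      | of Y => exact PEmpty.elim u
      | pt =>
        cases Z with
        | of Z => exact hab
        | pt => exact Subsingleton.elim (α := PUnit) a b
    | of X =>
      cases Y with
      | of Y =>
        cases Z with
        | pt => exact PEmpty.elim a
        | of Z => exact (hmono u).right_cancellation a b hab
      | pt =>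
        cases Z with
        | pt => exact PEmpty.elim a
        | of Z =>
          induction u using Quot.ind with
          | _ p =>
            cases p with
            | inl p =>
              have h : Quot.mk (witnessRel f g Z) (Sum.inl (a ≫ p)) =
                  Quot.mk (witnessRel f g Z) (Sum.inl (b ≫ p)) := hab
              haveI := hmono p
              exact (cancel_mono p).mp (quot_inl_inj f g hmono h)
            | inr p =>
              have h : Quot.mk (witnessRel f g Z) (Sum.inr (a ≫ p)) =
                  Quot.mk (witnessRel f g Z) (Sum.inr (b ≫ p)) := hab
              haveI := hmono p
              exact (cancel_mono p).mp (quot_inr_inj f g hmono h)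
  · refine ⟨Quot.mk _ (Sum.inl (𝟙 B)), Quot.mk _ (Sum.inr (𝟙 B')), ?_⟩
    show Quot.mk (witnessRel f g A) (Sum.inl (f ≫ 𝟙 B)) =
      Quot.mk (witnessRel f g A) (Sum.inr (g ≫ 𝟙 B'))
    exact Quot.sound ⟨𝟙 A, by simp, by simp⟩

end
end
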